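/- Let r ≥ 2 and 1 ≤ k ≤ n_1 ≤ n_2 ≤ ... ≤ n_r be integers, and let n = n_1 + n_2 + ... + n_r. Then Σ_{1 ≤ i < j ≤ r} n_i n_j − n_1 n_2 + (k−1) n_2 = (k−1)(n − n_1) + f_r(n_1−(k−1), n_2, ..., n_r). -/
import Mathlib


open SimpleGraph Finset

/-- `F` has a (not necessarily induced) copy in `G`:  there is an injective map of the
vertices of `F` into the vertices of `G` preserving adjacency. -/
def HasCopy {α β : Type*} (G : SimpleGraph α) (F : SimpleGraph β) : Prop :=
  ∃ f : β → α, Function.Injective f ∧ ∀ ⦃a b⦄, F.Adj a b → G.Adj (f a) (f b)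

/-- `exNum G F` is the maximum number of edges of a spanning subgraph of `G`
containing no copy of `F`. -/
noncomputable def exNum {α β : Type*} [Fintype α] (G : SimpleGraph α) (F : SimpleGraph β) : ℕ :=
  sSup {m | ∃ H : SimpleGraph α, H ≤ G ∧ ¬ HasCopy H F ∧ m = H.edgeSet.ncard}

/-- `kCliques k t` is the disjoint union of `k` copies of the complete graph `K_t`. -/
def kCliques (k t : ℕ) : SimpleGraph (Fin k × Fin t) :=
  SimpleGraph.fromRel (fun p q => p.1 = q.1)

/-- The complete multipartite graph with parts of sizes `n 0, …, n (r-1)`. -/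
abbrev completeMultipartite {r : ℕ} (n : Fin r → ℕ) : SimpleGraph (Σ i : Fin r, Fin (n i)) :=
  completeMultipartiteGraph (fun i => Fin (n i))

/-- The sum of `x` over the part of the (labelled) partition `g` with label `i`. -/
def partSum {r s : ℕ} (x : Fin r → ℕ) (g : Fin r → Fin s) (i : Fin s) : ℕ :=
  ∑ a ∈ Finset.univ.filter (fun a => g a = i), x a

/-- The sum, over unordered pairs of distinct parts of the (labelled) partition `g`,
of the products of the part sums of `x`. -/
def pairProdSum {r s : ℕ} (x : Fin r → ℕ) (g : Fin r → Fin s) : ℕ :=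
  ∑ p ∈ Finset.univ.filter (fun p : Fin s × Fin s => p.1 < p.2),
    partSum x g p.1 * partSum x g p.2

/-- The function `f_t` : the maximum, over all partitions of `{0, …, r-1}` into `t-1`
nonempty parts (encoded as surjections onto `Fin (t-1)`), of the sum over unordered pairs
of distinct parts of the products of the part sums. -/
def fT {r : ℕ} (t : ℕ) (x : Fin r → ℕ) : ℕ :=
  (Finset.univ.filter (fun g : Fin r → Fin (t - 1) => Function.Surjective g)).sup
    (fun g => pairProdSum x g)

lemma pairProdSum_eq {r s : ℕ} (x : Fin r → ℕ) (g : Fin r → Fin s) :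
    pairProdSum x g =
    ∑ p ∈ Finset.univ.filter (fun p : Fin r × Fin r => g p.1 < g p.2), x p.1 * x p.2 := by
  have key : ∀ q : Fin s × Fin s,
      partSum x g q.1 * partSum x g q.2 =
      ∑ p ∈ Finset.univ.filter (fun p : Fin r × Fin r => (g p.1, g p.2) = q),
        x p.1 * x p.2 := by
    intro q
    rw [partSum, partSum, Finset.sum_mul_sum, ← Finset.sum_product']
    apply Finset.sum_congr _ (fun _ _ => rfl)
    ext p
    simp [Finset.mem_product, Prod.ext_iff]
  have h := Finset.sum_fiberwise_eq_sum_filter (Finset.univ : Finset (Fin r × Fin r))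
    (Finset.univ.filter (fun q : Fin s × Fin s => q.1 < q.2))
    (fun p => (g p.1, g p.2)) (fun p => x p.1 * x p.2)
  rw [pairProdSum]
  calc ∑ q ∈ Finset.univ.filter (fun q : Fin s × Fin s => q.1 < q.2),
        partSum x g q.1 * partSum x g q.2
      = ∑ q ∈ Finset.univ.filter (fun q : Fin s × Fin s => q.1 < q.2),
        ∑ p ∈ Finset.univ.filter (fun p : Fin r × Fin r => (g p.1, g p.2) = q),
          x p.1 * x p.2 := Finset.sum_congr rfl (fun q _ => key q)
    _ = _ := by rw [h]; apply Finset.sum_congr _ (fun _ _ => rfl); ext p; simp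

lemma sum_swap_filter {r : ℕ} (x : Fin r → ℕ) (P : Fin r × Fin r → Prop) [DecidablePred P] :
    ∑ p ∈ Finset.univ.filter P, x p.1 * x p.2 =
    ∑ p ∈ Finset.univ.filter (fun p : Fin r × Fin r => P p.swap), x p.1 * x p.2 := by
  apply Finset.sum_nbij' (fun p : Fin r × Fin r => p.swap) (fun p : Fin r × Fin r => p.swap)
  · intro p hp; simp at hp ⊢; simpa using hp
  · intro p hp; simp at hp ⊢; exact hp
  · intro p _; simp
  · intro p _; simp
  · intro p _; simp [mul_comm]

lemma pairProdSum_add_eq {r s : ℕ} (x : Fin r → ℕ) (g : Fin r → Fin s) :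
    pairProdSum x g +
      ∑ p ∈ Finset.univ.filter (fun p : Fin r × Fin r => p.1 < p.2 ∧ g p.1 = g p.2),
        x p.1 * x p.2 =
    ∑ p ∈ Finset.univ.filter (fun p : Fin r × Fin r => p.1 < p.2), x p.1 * x p.2 := by
  classical
  rw [pairProdSum_eq]
  have h1 : (∑ p ∈ Finset.univ.filter (fun p : Fin r × Fin r => p.1 < p.2 ∧ g p.1 < g p.2),
        x p.1 * x p.2) +
      ∑ p ∈ Finset.univ.filter (fun p : Fin r × Fin r => p.1 < p.2 ∧ ¬ g p.1 < g p.2),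
        x p.1 * x p.2 =
      ∑ p ∈ Finset.univ.filter (fun p : Fin r × Fin r => p.1 < p.2), x p.1 * x p.2 := by
    rw [← Finset.filter_filter, ← Finset.filter_filter]
    exact Finset.sum_filter_add_sum_filter_not _ _ _
  have h2 : (∑ p ∈ Finset.univ.filter
        (fun p : Fin r × Fin r => (p.1 < p.2 ∧ ¬ g p.1 < g p.2) ∧ g p.2 < g p.1),
        x p.1 * x p.2) +
      ∑ p ∈ Finset.univ.filter
        (fun p : Fin r × Fin r => (p.1 < p.2 ∧ ¬ g p.1 < g p.2) ∧ ¬ g p.2 < g p.1),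
        x p.1 * x p.2 =
      ∑ p ∈ Finset.univ.filter (fun p : Fin r × Fin r => p.1 < p.2 ∧ ¬ g p.1 < g p.2),
        x p.1 * x p.2 := by
    have := Finset.sum_filter_add_sum_filter_not
      (Finset.univ.filter (fun p : Fin r × Fin r => p.1 < p.2 ∧ ¬ g p.1 < g p.2))
      (fun p => g p.2 < g p.1) (fun p => x p.1 * x p.2)
    rwa [Finset.filter_filter, Finset.filter_filter] at this
  have h3 : (∑ p ∈ Finset.univ.filter (fun p : Fin r × Fin r => g p.1 < g p.2 ∧ p.1 < p.2),
        x p.1 * x p.2) +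
      ∑ p ∈ Finset.univ.filter (fun p : Fin r × Fin r => g p.1 < g p.2 ∧ ¬ p.1 < p.2),
        x p.1 * x p.2 =
      ∑ p ∈ Finset.univ.filter (fun p : Fin r × Fin r => g p.1 < g p.2), x p.1 * x p.2 := by
    have := Finset.sum_filter_add_sum_filter_not
      (Finset.univ.filter (fun p : Fin r × Fin r => g p.1 < g p.2))
      (fun p => p.1 < p.2) (fun p => x p.1 * x p.2)
    rwa [Finset.filter_filter, Finset.filter_filter] at this
  have c1 : ∑ p ∈ Finset.univ.filter
        (fun p : Fin r × Fin r => (p.1 < p.2 ∧ ¬ g p.1 < g p.2) ∧ ¬ g p.2 < g p.1),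
        x p.1 * x p.2 =
      ∑ p ∈ Finset.univ.filter (fun p : Fin r × Fin r => p.1 < p.2 ∧ g p.1 = g p.2),
        x p.1 * x p.2 := by
    apply Finset.sum_congr _ (fun _ _ => rfl)
    ext p
    simp only [Finset.mem_filter, Finset.mem_univ, true_and]
    constructor
    · rintro ⟨⟨a1, a2⟩, a3⟩; exact ⟨a1, le_antisymm (not_lt.mp a3) (not_lt.mp a2)⟩
    · rintro ⟨a1, a2⟩; exact ⟨⟨a1, by rw [a2]; exact lt_irrefl _⟩, by rw [a2]; exact lt_irrefl _⟩
  have c2 : ∑ p ∈ Finset.univ.filter (fun p : Fin r × Fin r => g p.1 < g p.2 ∧ p.1 < p.2),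
        x p.1 * x p.2 =
      ∑ p ∈ Finset.univ.filter (fun p : Fin r × Fin r => p.1 < p.2 ∧ g p.1 < g p.2),
        x p.1 * x p.2 := by
    apply Finset.sum_congr _ (fun _ _ => rfl)
    ext p
    simp only [Finset.mem_filter, Finset.mem_univ, true_and]
    exact and_comm
  have c3 : ∑ p ∈ Finset.univ.filter (fun p : Fin r × Fin r => g p.1 < g p.2 ∧ ¬ p.1 < p.2),
        x p.1 * x p.2 =
      ∑ p ∈ Finset.univ.filter
        (fun p : Fin r × Fin r => (p.1 < p.2 ∧ ¬ g p.1 < g p.2) ∧ g p.2 < g p.1),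
        x p.1 * x p.2 := by
    rw [sum_swap_filter]
    apply Finset.sum_congr _ (fun _ _ => rfl)
    ext p
    simp only [Finset.mem_filter, Finset.mem_univ, true_and, Prod.fst_swap, Prod.snd_swap]
    constructor
    · rintro ⟨a1, a2⟩
      have hne : p.1 ≠ p.2 := fun h => by rw [h] at a1; exact lt_irrefl _ a1
      exact ⟨⟨lt_of_le_of_ne (not_lt.mp a2) hne, not_lt.mpr (le_of_lt a1)⟩, a1⟩
    · rintro ⟨⟨a1, a2⟩, a3⟩; exact ⟨a3, not_lt.mpr (le_of_lt a1)⟩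
  omega

lemma fT_eq {r : ℕ} (hr : 2 ≤ r) (x : Fin r → ℕ)
    (h0 : ∀ a, x ⟨0, by omega⟩ ≤ x a)
    (h1 : ∀ b : Fin r, 1 ≤ b.val → x ⟨1, by omega⟩ ≤ x b) :
    fT r x + x ⟨0, by omega⟩ * x ⟨1, by omega⟩ =
      ∑ p ∈ Finset.univ.filter (fun p : Fin r × Fin r => p.1 < p.2), x p.1 * x p.2 := by
  classical
  set T := ∑ p ∈ Finset.univ.filter (fun p : Fin r × Fin r => p.1 < p.2), x p.1 * x p.2 with hT
  set c := x ⟨0, by omega⟩ * x ⟨1, by omega⟩ with hc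
  -- the partition merging 0 and 1
  have hr1 : 1 ≤ r - 1 := by omega
  let g₀ : Fin r → Fin (r - 1) := fun a => ⟨a.val - 1, by omega⟩
  have hg₀ : Function.Surjective g₀ := by
    intro j
    exact ⟨⟨j.val + 1, by omega⟩, by simp [g₀]⟩
  have hD₀ : Finset.univ.filter (fun p : Fin r × Fin r => p.1 < p.2 ∧ g₀ p.1 = g₀ p.2) =
      {((⟨0, by omega⟩ : Fin r), (⟨1, by omega⟩ : Fin r))} := by
    ext p
    simp only [Finset.mem_filter, Finset.mem_univ, true_and, Finset.mem_singleton,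
      Prod.ext_iff, Fin.ext_iff, Fin.lt_def, g₀]
    omega
  have hA : pairProdSum x g₀ + c = T := by
    have := pairProdSum_add_eq x g₀
    rwa [hD₀, Finset.sum_singleton] at this
  -- upper bound
  have hub : ∀ g : Fin r → Fin (r - 1), Function.Surjective g → pairProdSum x g ≤ T - c := by
    intro g _
    have hkey := pairProdSum_add_eq x g
    have hne : ∃ p : Fin r × Fin r,
        p ∈ Finset.univ.filter (fun p : Fin r × Fin r => p.1 < p.2 ∧ g p.1 = g p.2) := by
      obtain ⟨a, b, hab, heq⟩ := Fintype.exists_ne_map_eq_of_card_lt g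
        (by simp only [Fintype.card_fin]; omega)
      rcases lt_or_gt_of_ne hab with h | h
      · exact ⟨(a, b), by simp [h, heq]⟩
      · exact ⟨(b, a), by simp [h, heq.symm]⟩
    obtain ⟨p, hp⟩ := hne
    have hcp : c ≤ x p.1 * x p.2 := by
      simp only [Finset.mem_filter, Finset.mem_univ, true_and] at hp
      have hb : 1 ≤ p.2.val := by
        have := hp.1
        simp only [Fin.lt_def] at this
        omega
      exact Nat.mul_le_mul (h0 p.1) (h1 p.2 hb)
    have hcd : c ≤ ∑ p ∈ Finset.univ.filter
        (fun p : Fin r × Fin r => p.1 < p.2 ∧ g p.1 = g p.2), x p.1 * x p.2 :=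
      le_trans hcp (Finset.single_le_sum (f := fun p : Fin r × Fin r => x p.1 * x p.2) (fun _ _ => Nat.zero_le _) hp)
    omega
  have hsup : fT r x ≤ T - c := by
    apply Finset.sup_le
    intro g hg
    simp only [Finset.mem_filter, Finset.mem_univ, true_and] at hg
    exact hub g hg
  have hlb : pairProdSum x g₀ ≤ fT r x :=
    Finset.le_sup (by simp [hg₀])
  omega

lemma update_pair_sum {r : ℕ} (hr : 2 ≤ r) (n : Fin r → ℕ) (m d : ℕ)
    (hm : m + d = n ⟨0, by omega⟩) :
    (∑ p ∈ Finset.univ.filter (fun p : Fin r × Fin r => p.1 < p.2),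
        (Function.update n ⟨0, by omega⟩ m) p.1 * (Function.update n ⟨0, by omega⟩ m) p.2)
      + d * ∑ b ∈ Finset.univ.erase (⟨0, by omega⟩ : Fin r), n b =
    ∑ p ∈ Finset.univ.filter (fun p : Fin r × Fin r => p.1 < p.2), n p.1 * n p.2 := by
  classical
  set z0 : Fin r := ⟨0, by omega⟩ with hz0
  set x := Function.update n z0 m with hx
  have key : ∀ p ∈ Finset.univ.filter (fun p : Fin r × Fin r => p.1 < p.2),
      n p.1 * n p.2 = x p.1 * x p.2 + (if p.1 = z0 then d * n p.2 else 0) := by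
    intro p hp
    simp only [Finset.mem_filter, Finset.mem_univ, true_and] at hp
    have hp2 : p.2 ≠ z0 := by
      intro h
      rw [h] at hp
      exact absurd hp (by simp [Fin.lt_def, z0])
    by_cases h1 : p.1 = z0
    · rw [h1, if_pos rfl, hx]
      rw [Function.update_self, Function.update_of_ne hp2]
      rw [← hm]; ring
    · rw [if_neg h1, hx, Function.update_of_ne h1, Function.update_of_ne hp2, add_zero]
  rw [Finset.sum_congr rfl key, Finset.sum_add_distrib]
  congr 1
  rw [← Finset.sum_filter, Finset.filter_filter]
  have hbij : ∑ p ∈ Finset.univ.filter (fun p : Fin r × Fin r => p.1 < p.2 ∧ p.1 = z0),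
      d * n p.2 = ∑ b ∈ Finset.univ.erase z0, d * n b := by
    apply Finset.sum_nbij' (fun p : Fin r × Fin r => p.2) (fun b => (z0, b))
    · intro p hp
      simp only [Finset.mem_filter, Finset.mem_univ, true_and] at hp
      simp only [Finset.mem_erase, Finset.mem_univ, and_true]
      intro h
      rw [hp.2, h] at hp
      exact absurd hp.1 (lt_irrefl _)
    · intro b hb
      simp only [Finset.mem_erase, Finset.mem_univ, and_true] at hb
      simp only [Finset.mem_filter, Finset.mem_univ, true_and]
      have hb0 : b.val ≠ 0 := fun h => hb (Fin.ext (by simp [z0, h]))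
      refine ⟨?_, trivial⟩
      simp only [Fin.lt_def, z0]
      omega
    · intro p hp
      simp only [Finset.mem_filter, Finset.mem_univ, true_and] at hp
      exact Prod.ext hp.2.symm rfl
    · intro b _; rfl
    · intro p _; rfl
  rw [hbij, Finset.mul_sum]

/-- For `r ≥ 2` and `1 ≤ k ≤ n_1 ≤ ⋯ ≤ n_r`, with `n = Σ n_i`,
`Σ_{i<j} n_i n_j − n_1 n_2 + (k−1) n_2 = (k−1)(n − n_1) + f_r(n_1−(k−1), n_2, …, n_r)`. -/
theorem stmt_2 (r k : ℕ) (hr : 2 ≤ r) (n : Fin r → ℕ) (hmono : Monotone n)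
    (hk : 1 ≤ k) (hkn : k ≤ n ⟨0, by omega⟩) :
    (∑ p ∈ Finset.univ.filter (fun p : Fin r × Fin r => p.1 < p.2), n p.1 * n p.2)
        - n ⟨0, by omega⟩ * n ⟨1, by omega⟩ + (k - 1) * n ⟨1, by omega⟩ =
      (k - 1) * ((∑ i, n i) - n ⟨0, by omega⟩) +
        fT r (Function.update n ⟨0, by omega⟩ (n ⟨0, by omega⟩ - (k - 1))) := by
  classical
  have h0r : 0 < r := by omega
  have h1r : 1 < r := by omega
  set z0 : Fin r := ⟨0, h0r⟩ with hz0def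
  set z1 : Fin r := ⟨1, h1r⟩ with hz1def
  set m : ℕ := n z0 - (k - 1) with hmdef
  set d : ℕ := k - 1 with hddef
  set x : Fin r → ℕ := Function.update n z0 m with hxdef
  have hm : m + d = n z0 := by
    have : d ≤ n z0 := by omega
    omega
  -- the update lemma
  have hUpd : (∑ p ∈ Finset.univ.filter (fun p : Fin r × Fin r => p.1 < p.2),
        x p.1 * x p.2)
      + d * ∑ b ∈ Finset.univ.erase z0, n b =
      ∑ p ∈ Finset.univ.filter (fun p : Fin r × Fin r => p.1 < p.2), n p.1 * n p.2 :=
    update_pair_sum hr n m d hm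
  -- hypotheses for fT_eq
  have hx0 : x z0 = m := by rw [hxdef]; exact Function.update_self _ _ _
  have hz1ne : z1 ≠ z0 := by
    intro h
    have := congrArg Fin.val h
    simp [hz0def, hz1def] at this
  have hx1 : x z1 = n z1 := by rw [hxdef]; exact Function.update_of_ne hz1ne _ _
  have h0 : ∀ a, x z0 ≤ x a := by
    intro a
    by_cases h : a = z0
    · rw [h]
    · rw [hxdef]
      rw [Function.update_self, Function.update_of_ne h]
      have : n z0 ≤ n a := hmono (by simp [Fin.le_def, hz0def])
      omega
  have h1 : ∀ b : Fin r, 1 ≤ b.val → x z1 ≤ x b := by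
    intro b hb
    have hbne : b ≠ z0 := by
      intro h
      rw [h] at hb
      simp [hz0def] at hb
    rw [hx1, hxdef, Function.update_of_ne hbne]
    exact hmono (by simp [Fin.le_def, hz1def]; omega)
  have hfT := fT_eq hr x h0 h1
  -- identify the indices in fT_eq with z0, z1
  have hfT' : fT r x + x z0 * x z1 =
      ∑ p ∈ Finset.univ.filter (fun p : Fin r × Fin r => p.1 < p.2), x p.1 * x p.2 := hfT
  -- product identity
  have hx01 : x z0 * x z1 + d * n z1 = n z0 * n z1 := by
    rw [hx0, hx1, ← add_mul, hm]
  -- erased sum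
  have hE : (∑ b ∈ Finset.univ.erase z0, n b) + n z0 = ∑ i, n i :=
    Finset.sum_erase_add _ _ (Finset.mem_univ z0)
  have hz1mem : z1 ∈ Finset.univ.erase z0 := by
    simp only [Finset.mem_erase, Finset.mem_univ, and_true]
    exact hz1ne
  have hQU : d * n z1 ≤ d * ∑ b ∈ Finset.univ.erase z0, n b :=
    Nat.mul_le_mul_left d (Finset.single_le_sum (fun _ _ => Nat.zero_le _) hz1mem)
  have hgoalE : (∑ i, n i) - n z0 = ∑ b ∈ Finset.univ.erase z0, n b := by omega
  rw [hgoalE]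
  have hfin : fT r x + x z0 * x z1 + d * ∑ b ∈ Finset.univ.erase z0, n b =
      ∑ p ∈ Finset.univ.filter (fun p : Fin r × Fin r => p.1 < p.2), n p.1 * n p.2 := by
    rw [← hUpd, ← hfT']
  have hPle : n z0 * n z1 ≤
      ∑ p ∈ Finset.univ.filter (fun p : Fin r × Fin r => p.1 < p.2), n p.1 * n p.2 := by
    omega
  generalize hFv : fT r x = F at hfin
  generalize hXv : x z0 * x z1 = X at hfin hx01
  generalize hAv : d * ∑ b ∈ Finset.univ.erase z0, n b = A at hfin hQU
  generalize hBv : d * n z1 = B at hfin hx01 hQU ⊢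
  generalize hPv : n z0 * n z1 = P at hfin hx01 hPle ⊢
  generalize hTv : (∑ p ∈ Finset.univ.filter (fun p : Fin r × Fin r => p.1 < p.2),
      n p.1 * n p.2) = Tn at hfin hPle ⊢
  omega
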